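/- arXiv:0907.2194 — 5 statements merged into one kernel-verified Lean document; each statement's English description precedes it below -/
import Mathlib

section
/- Let ψ^R_{A,B} : A ⊗ E B ⟶ E(A ⊗ B) be defined as ψ^R_{A,B} := E(c_{B,A}) ∘ ψ^L_{B,A} ∘ c_{A,EB}. Then the equation (ψ^R a) holds: for all objects A, B, C of C, E(a_{A,B,C}) ∘ ψ^R_{A⊗B,C} = ψ^R_{A,B⊗C} ∘ (1_A ⊗ ψ^R_{B,C}) ∘ a_{A,B,EC}. -/
open CategoryTheory MonoidalCategory

/-- For a left monoidal endofunctor `E` of a symmetric monoidal category `C`,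
the family `ψ^R_{A,B} := E(c_{B,A}) ∘ ψ^L_{B,A} ∘ c_{A,EB}` satisfies the equation (ψ^R a):
`E(a_{A,B,C}) ∘ ψ^R_{A⊗B,C} = ψ^R_{A,B⊗C} ∘ (1_A ⊗ ψ^R_{B,C}) ∘ a_{A,B,EC}`. -/
theorem psiR_assoc {C : Type*} [Category C] [MonoidalCategory C] [SymmetricCategory C]
    (E : C ⥤ C)
    (ψL : ∀ A B : C, E.obj A ⊗ B ⟶ E.obj (A ⊗ B))
    (ψL_nat : ∀ {A A' B B' : C} (f : A ⟶ A') (g : B ⟶ B'),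
      (E.map f ⊗ₘ g) ≫ ψL A' B' = ψL A B ≫ E.map (f ⊗ₘ g))
    (ψLa : ∀ A B C' : C,
      (ψL A B ⊗ₘ 𝟙 C') ≫ ψL (A ⊗ B) C' ≫ E.map (α_ A B C').hom
        = (α_ (E.obj A) B C').hom ≫ ψL A (B ⊗ C'))
    (ψLr : ∀ A : C, ψL A (𝟙_ C) ≫ E.map (ρ_ A).hom = (ρ_ (E.obj A)).hom)
    (ψR : ∀ A B : C, A ⊗ E.obj B ⟶ E.obj (A ⊗ B))
    (hψR : ∀ A B : C,
      ψR A B = (β_ A (E.obj B)).hom ≫ ψL B A ≫ E.map (β_ B A).hom) :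
    ∀ A B C' : C,
      ψR (A ⊗ B) C' ≫ E.map (α_ A B C').hom
        = (α_ A B (E.obj C')).hom ≫ (𝟙 A ⊗ₘ ψR B C') ≫ ψR A (B ⊗ C') := by
  intro A B X
  have nat1' : ψL X (A ⊗ B)
      = E.obj X ◁ (β_ A B).hom ≫ ψL X (B ⊗ A) ≫ E.map (X ◁ (β_ B A).hom) := by
    rw [← cancel_mono (E.map (X ◁ (β_ A B).hom))]
    rw [Category.assoc, Category.assoc, ← E.map_comp, ← MonoidalCategory.whiskerLeft_comp]
    simp only [SymmetricCategory.symmetry, MonoidalCategory.whiskerLeft_id, E.map_id,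
      Category.comp_id]
    simpa using (ψL_nat (𝟙 X) (β_ A B).hom).symm
  have nat2 : E.map (β_ X B).hom ▷ A ≫ ψL (B ⊗ X) A
      = ψL (X ⊗ B) A ≫ E.map ((β_ X B).hom ▷ A) := by
    simpa using ψL_nat (β_ X B).hom (𝟙 A)
  have assoc1 : ψL X B ▷ A ≫ ψL (X ⊗ B) A
      = (α_ (E.obj X) B A).hom ≫ ψL X (B ⊗ A) ≫ E.map (α_ X B A).inv := by
    rw [← cancel_mono (E.map (α_ X B A).hom)]
    simp only [Category.assoc, ← E.map_comp, Iso.inv_hom_id, E.map_id, Category.comp_id]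
    simpa using ψLa X B A
  have coh1 : (β_ (A ⊗ B) (E.obj X)).hom ≫ E.obj X ◁ (β_ A B).hom
      = (α_ A B (E.obj X)).hom ≫ A ◁ (β_ B (E.obj X)).hom
          ≫ (β_ A (E.obj X ⊗ B)).hom ≫ (α_ (E.obj X) B A).hom := by
    simp
  have coh2 : X ◁ (β_ B A).hom ≫ (β_ X (A ⊗ B)).hom ≫ (α_ A B X).hom
      = (α_ X B A).inv ≫ (β_ X B).hom ▷ A ≫ (β_ (B ⊗ X) A).hom := by
    simp only [BraidedCategory.braiding_tensor_right_hom, BraidedCategory.braiding_tensor_left_hom,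
      Category.assoc]
    simp only [Iso.inv_hom_id, Category.comp_id]
    exact (BraidedCategory.yang_baxter X B A).symm
  simp only [hψR, id_tensorHom, tensorHom_id, MonoidalCategory.whiskerLeft_comp,
    Category.assoc]
  rw [nat1']
  slice_rhs 4 5 => rw [BraidedCategory.braiding_naturality_right]
  slice_rhs 3 4 => rw [BraidedCategory.braiding_naturality_right]
  slice_rhs 5 6 => rw [nat2]
  slice_rhs 4 5 => rw [assoc1]
  slice_lhs 1 2 => rw [coh1]
  simp only [Category.assoc, ← E.map_comp]
  rw [coh2]
end

section
/- Let ψ^R_{A,B} : A ⊗ E B ⟶ E(A ⊗ B) be defined as ψ^R_{A,B} := E(c_{B,A}) ∘ ψ^L_{B,A} ∘ c_{A,EB}. Then the equation (ψ^Lψ^R a) holds: for all objects A, B, C of C, E(a_{A,B,C}) ∘ ψ^L_{A⊗B,C} ∘ (ψ^R_{A,B} ⊗ 1_C) = ψ^R_{A,B⊗C} ∘ (1_A ⊗ ψ^L_{B,C}) ∘ a_{A,EB,C}. -/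
open CategoryTheory MonoidalCategory

/-- For a left monoidal endofunctor `E` of a symmetric monoidal category `C`,
with `ψ^R_{A,B} := E(c_{B,A}) ∘ ψ^L_{B,A} ∘ c_{A,EB}`, the equation (ψ^Lψ^R a) holds:
`E(a_{A,B,C}) ∘ ψ^L_{A⊗B,C} ∘ (ψ^R_{A,B} ⊗ 1_C)
  = ψ^R_{A,B⊗C} ∘ (1_A ⊗ ψ^L_{B,C}) ∘ a_{A,EB,C}`. -/
theorem psiL_psiR_assoc {C : Type*} [Category C] [MonoidalCategory C] [SymmetricCategory C]
    (E : C ⥤ C)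
    (ψL : ∀ A B : C, E.obj A ⊗ B ⟶ E.obj (A ⊗ B))
    (ψL_nat : ∀ {A A' B B' : C} (f : A ⟶ A') (g : B ⟶ B'),
      (E.map f ⊗ₘ g) ≫ ψL A' B' = ψL A B ≫ E.map (f ⊗ₘ g))
    (ψLa : ∀ A B C' : C,
      (ψL A B ⊗ₘ 𝟙 C') ≫ ψL (A ⊗ B) C' ≫ E.map (α_ A B C').hom
        = (α_ (E.obj A) B C').hom ≫ ψL A (B ⊗ C'))
    (ψLr : ∀ A : C, ψL A (𝟙_ C) ≫ E.map (ρ_ A).hom = (ρ_ (E.obj A)).hom)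
    (ψR : ∀ A B : C, A ⊗ E.obj B ⟶ E.obj (A ⊗ B))
    (hψR : ∀ A B : C,
      ψR A B = (β_ A (E.obj B)).hom ≫ ψL B A ≫ E.map (β_ B A).hom) :
    ∀ A B C' : C,
      (ψR A B ⊗ₘ 𝟙 C') ≫ ψL (A ⊗ B) C' ≫ E.map (α_ A B C').hom
        = (α_ A (E.obj B) C').hom ≫ (𝟙 A ⊗ₘ ψL B C') ≫ ψR A (B ⊗ C') := by
  intro A B C'
  have key : ∀ X Y Z : C, (ψL X Y ⊗ₘ 𝟙 Z) ≫ ψL (X ⊗ Y) Z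
      = (α_ (E.obj X) Y Z).hom ≫ ψL X (Y ⊗ Z) ≫ E.map (α_ X Y Z).inv := by
    intro X Y Z
    rw [← Category.assoc, ← ψLa]
    simp [← E.map_comp]
  rw [hψR, hψR]
  simp only [comp_tensor_id, Category.assoc]
  slice_lhs 3 4 => rw [ψL_nat (β_ B A).hom (𝟙 C')]
  slice_lhs 2 3 => rw [key]
  simp only [id_tensorHom, tensorHom_id]
  slice_rhs 2 3 => rw [BraidedCategory.braiding_naturality_right]
  slice_rhs 3 4 => rw [show ψL B C' ▷ A ≫ ψL (B ⊗ C') A = (ψL B C' ⊗ₘ 𝟙 A) ≫ ψL (B ⊗ C') A by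
    rw [tensorHom_id], key]
  have h2 : ψL B (C' ⊗ A) = (E.map (𝟙 B) ⊗ₘ (β_ C' A).hom) ≫ ψL B (A ⊗ C') ≫ E.map (𝟙 B ⊗ₘ (β_ A C').hom) := by
    conv_rhs => rw [← Category.assoc, ψL_nat]
    rw [Category.assoc, ← E.map_comp, tensorHom_comp_tensorHom]
    simp [SymmetricCategory.symmetry]
  rw [h2]
  simp only [Category.assoc, ← E.map_comp, E.map_id, id_tensorHom, tensorHom_id]
  have pure2 : B ◁ (β_ A C').hom ≫ (α_ B C' A).inv ≫ (β_ (B ⊗ C') A).hom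
      = (α_ B A C').inv ≫ (β_ B A).hom ▷ C' ≫ (α_ A B C').hom := by
    rw [← cancel_mono (α_ A B C').inv]
    slice_lhs 2 4 => rw [BraidedCategory.hexagon_reverse]
    rw [← Category.assoc, ← MonoidalCategory.whiskerLeft_comp, SymmetricCategory.symmetry]
    simp
  have pure1 : (α_ A (E.obj B) C').hom ≫ (β_ A (E.obj B ⊗ C')).hom ≫ (α_ (E.obj B) C' A).hom
        ≫ E.obj B ◁ (β_ C' A).hom
      = (β_ A (E.obj B)).hom ▷ C' ≫ (α_ (E.obj B) A C').hom := by
    slice_lhs 1 3 => rw [BraidedCategory.hexagon_forward]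
    simp [← MonoidalCategory.whiskerLeft_comp, SymmetricCategory.symmetry]
  rw [pure2, reassoc_of% pure1]
end

section
/- For each n ≥ 0 and objects A, B of C, define μ_n^{A,B} : E^n A ⨯ E^n B ⟶ E^n(A ⨯ B) recursively by μ_0^{A,B} := 1_{A⨯B} and μ_{n+1}^{A,B} := E(μ_n^{A,B}) ∘ ψ_{E^n A, E^n B}, where E^n denotes the n-fold iterate of E. Then the extensionality equation holds: for all n, A, B, μ_n^{A,B} ∘ ⟨E^n(π₁), E^n(π₂)⟩ = 1_{E^n(A⨯B)}, where ⟨E^n(π₁), E^n(π₂)⟩ : E^n(A⨯B) ⟶ E^n A ⨯ E^n B is the pairing of the images under E^n of the two product projections π₁ : A⨯B ⟶ A and π₂ : A⨯B ⟶ B. -/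
open CategoryTheory CategoryTheory.Limits

/-- The `n`-fold iterate `E^n` of an endofunctor `E`. -/
def functorIter {C : Type*} [Category C] (E : C ⥤ C) : ℕ → C ⥤ C
  | 0 => Functor.id C
  | n + 1 => functorIter E n ⋙ E

/-- The maps `μ_n : E^n A ⨯ E^n B ⟶ E^n (A ⨯ B)` defined recursively by
`μ_0 := 𝟙` and `μ_{n+1} := E(μ_n) ∘ ψ_{E^n A, E^n B}`. -/
noncomputable def muIter {C : Type*} [Category C] [HasBinaryProducts C] (E : C ⥤ C)
    (ψ : ∀ A B : C, E.obj A ⨯ E.obj B ⟶ E.obj (A ⨯ B)) :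
    ∀ (n : ℕ) (A B : C),
      (functorIter E n).obj A ⨯ (functorIter E n).obj B ⟶ (functorIter E n).obj (A ⨯ B)
  | 0, A, B => 𝟙 (A ⨯ B)
  | n + 1, A, B =>
      ψ ((functorIter E n).obj A) ((functorIter E n).obj B) ≫ E.map (muIter E ψ n A B)

/-- If `E` is an endofunctor of a category with binary products, equipped with a
natural family `ψ_{A,B} : E A ⨯ E B ⟶ E (A ⨯ B)` satisfying `(ψΔ) : E(Δ_A) = ψ_{A,A} ∘ Δ_{EA}`,
then the extensionality equation holds:
`μ_n ∘ ⟨E^n π₁, E^n π₂⟩ = 𝟙 (E^n (A ⨯ B))` for all `n`, `A`, `B`. -/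
theorem muIter_extensionality {C : Type*} [Category C] [HasBinaryProducts C] (E : C ⥤ C)
    (ψ : ∀ A B : C, E.obj A ⨯ E.obj B ⟶ E.obj (A ⨯ B))
    (ψ_nat : ∀ {A A' B B' : C} (f : A ⟶ A') (g : B ⟶ B'),
      prod.map (E.map f) (E.map g) ≫ ψ A' B' = ψ A B ≫ E.map (prod.map f g))
    (ψΔ : ∀ A : C, E.map (diag A) = diag (E.obj A) ≫ ψ A A) :
    ∀ (n : ℕ) (A B : C),
      prod.lift ((functorIter E n).map (prod.fst : A ⨯ B ⟶ A))
          ((functorIter E n).map (prod.snd : A ⨯ B ⟶ B)) ≫ muIter E ψ n A B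
        = 𝟙 ((functorIter E n).obj (A ⨯ B)) := by
  intro n
  induction n with
  | zero =>
    intro A B
    simp [functorIter, muIter]
    exact prod.lift_fst_snd
  | succ n ih =>
    intro A B
    have key : prod.lift (E.map ((functorIter E n).map (prod.fst : A ⨯ B ⟶ A)))
        (E.map ((functorIter E n).map (prod.snd : A ⨯ B ⟶ B)))
        ≫ ψ ((functorIter E n).obj A) ((functorIter E n).obj B)
        = E.map (prod.lift ((functorIter E n).map (prod.fst : A ⨯ B ⟶ A))
            ((functorIter E n).map (prod.snd : A ⨯ B ⟶ B))) := by
      have h1 : prod.lift (E.map ((functorIter E n).map (prod.fst : A ⨯ B ⟶ A)))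
          (E.map ((functorIter E n).map (prod.snd : A ⨯ B ⟶ B)))
          = diag (E.obj ((functorIter E n).obj (A ⨯ B)))
            ≫ prod.map (E.map ((functorIter E n).map (prod.fst : A ⨯ B ⟶ A)))
              (E.map ((functorIter E n).map (prod.snd : A ⨯ B ⟶ B))) := by
        ext <;> simp [diag]
      rw [h1, Category.assoc, ψ_nat, ← Category.assoc, ← ψΔ, ← E.map_comp]
      congr 1
      ext <;> simp [diag]
    show prod.lift (E.map _) (E.map _) ≫ (ψ _ _ ≫ E.map (muIter E ψ n A B)) = _
    rw [← Category.assoc, key, ← E.map_comp, ih A B, E.map_id]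
    rfl
end

section
/- The equation (ΨΨ1) holds: for all objects A₁, A₂, A₃, B₁, B₂ of C, the composite (Ψ_{A₁⊗A₃,A₂;B₁} ⊗ 1_{B₂}) ∘ Ψ_{A₁,A₃;(B₁⊗EA₂)⊗B₂} equals the composite ((E(a⁻¹_{A₁,A₃,A₂}) ∘ E(1_{A₁} ⊗ c_{A₂,A₃}) ∘ E(a_{A₁,A₂,A₃})) ⊗ 1_{B₁⊗B₂}) ∘ Ψ_{A₁⊗A₂,A₃;B₁⊗B₂} ∘ (Ψ_{A₁,A₂;B₁} ⊗ 1_{B₂⊗EA₃}), where on each side the unique structural coherence isomorphisms of C (built from a, l, r and their inverses) are inserted between the displayed factors so that the composites are well-typed morphisms with common source a bracketing of EA₁ ⊗ B₁ ⊗ EA₂ ⊗ B₂ ⊗ EA₃ and common target E((A₁⊗A₃)⊗A₂) ⊗ (B₁⊗B₂) (in Lean this can be expressed with monoidal coherent composition ⊗≫). -/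
open CategoryTheory MonoidalCategory

open BraidedCategory

theorem PsiPsi_key {C : Type*} [Category C] [MonoidalCategory C] [SymmetricCategory C]
    (E : C ⥤ C)
    (ψ : ∀ A B : C, E.obj A ⊗ E.obj B ⟶ E.obj (A ⊗ B))
    (ψ_nat : ∀ {A A' B B' : C} (f : A ⟶ A') (g : B ⟶ B'),
      (E.map f ⊗ₘ E.map g) ≫ ψ A' B' = ψ A B ≫ E.map (f ⊗ₘ g))
    (ψa : ∀ A B C' : C,
      (ψ A B ⊗ₘ 𝟙 (E.obj C')) ≫ ψ (A ⊗ B) C' ≫ E.map (α_ A B C').hom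
        = (α_ (E.obj A) (E.obj B) (E.obj C')).hom ≫ (𝟙 (E.obj A) ⊗ₘ ψ B C') ≫ ψ A (B ⊗ C'))
    (ψc : ∀ A B : C,
      ψ A B ≫ E.map (β_ A B).hom = (β_ (E.obj A) (E.obj B)).hom ≫ ψ B A)
    (A₁ A₂ A₃ : C) :
    (ψ A₁ A₂ ⊗ₘ 𝟙 (E.obj A₃)) ≫ ψ (A₁ ⊗ A₂) A₃ ≫
      E.map (α_ A₁ A₂ A₃).hom ≫ E.map (𝟙 A₁ ⊗ₘ (β_ A₂ A₃).hom) ≫ E.map (α_ A₁ A₃ A₂).inv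
    = (α_ (E.obj A₁) (E.obj A₂) (E.obj A₃)).hom ≫
      (𝟙 (E.obj A₁) ⊗ₘ (β_ (E.obj A₂) (E.obj A₃)).hom) ≫
      (α_ (E.obj A₁) (E.obj A₃) (E.obj A₂)).inv ≫
      (ψ A₁ A₃ ⊗ₘ 𝟙 (E.obj A₂)) ≫ ψ (A₁ ⊗ A₃) A₂ := by
  have h1 : ψ A₁ (A₂ ⊗ A₃) ≫ E.map (𝟙 A₁ ⊗ₘ (β_ A₂ A₃).hom)
      = (𝟙 (E.obj A₁) ⊗ₘ E.map (β_ A₂ A₃).hom) ≫ ψ A₁ (A₃ ⊗ A₂) := by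
    rw [← ψ_nat (𝟙 A₁) (β_ A₂ A₃).hom, E.map_id]
  have h2 := ψa A₁ A₂ A₃
  have h3 := ψa A₁ A₃ A₂
  have h4 : (ψ A₁ A₃ ⊗ₘ 𝟙 (E.obj A₂)) ≫ ψ (A₁ ⊗ A₃) A₂
      = (α_ (E.obj A₁) (E.obj A₃) (E.obj A₂)).hom ≫ (𝟙 (E.obj A₁) ⊗ₘ ψ A₃ A₂) ≫
        ψ A₁ (A₃ ⊗ A₂) ≫ E.map (α_ A₁ A₃ A₂).inv := by
    rw [← cancel_mono (E.map (α_ A₁ A₃ A₂).hom)]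
    simp only [Category.assoc, ← E.map_comp, Iso.inv_hom_id, E.map_id, Category.comp_id]
    simpa using h3
  rw [h4]
  calc (ψ A₁ A₂ ⊗ₘ 𝟙 (E.obj A₃)) ≫ ψ (A₁ ⊗ A₂) A₃ ≫
      E.map (α_ A₁ A₂ A₃).hom ≫ E.map (𝟙 A₁ ⊗ₘ (β_ A₂ A₃).hom) ≫ E.map (α_ A₁ A₃ A₂).inv
      = ((α_ (E.obj A₁) (E.obj A₂) (E.obj A₃)).hom ≫ (𝟙 (E.obj A₁) ⊗ₘ ψ A₂ A₃) ≫
          ψ A₁ (A₂ ⊗ A₃)) ≫ E.map (𝟙 A₁ ⊗ₘ (β_ A₂ A₃).hom) ≫ E.map (α_ A₁ A₃ A₂).inv := by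
        rw [← h2]; simp
    _ = (α_ (E.obj A₁) (E.obj A₂) (E.obj A₃)).hom ≫ (𝟙 (E.obj A₁) ⊗ₘ ψ A₂ A₃) ≫
          (𝟙 (E.obj A₁) ⊗ₘ E.map (β_ A₂ A₃).hom) ≫ ψ A₁ (A₃ ⊗ A₂) ≫
          E.map (α_ A₁ A₃ A₂).inv := by
        simp only [Category.assoc]; rw [reassoc_of% h1]
    _ = (α_ (E.obj A₁) (E.obj A₂) (E.obj A₃)).hom ≫
          (𝟙 (E.obj A₁) ⊗ₘ (β_ (E.obj A₂) (E.obj A₃)).hom) ≫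
          (𝟙 (E.obj A₁) ⊗ₘ ψ A₃ A₂) ≫ ψ A₁ (A₃ ⊗ A₂) ≫ E.map (α_ A₁ A₃ A₂).inv := by
        rw [tensorHom_comp_tensorHom_assoc, tensorHom_comp_tensorHom_assoc, ψc]
    _ = _ := by simp

set_option maxHeartbeats 1000000 in
theorem PsiPsi_mid {C : Type*} [Category C] [MonoidalCategory C] [SymmetricCategory C]
    (Y₁ X₂ X₃ : C) :
    ((β_ Y₁ X₂).hom ▷ X₃ ⊗≫ X₂ ◁ (β_ Y₁ X₃).hom ⊗≫ (β_ X₂ X₃).hom ▷ Y₁ ⊗≫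
      𝟙 ((X₃ ⊗ X₂) ⊗ Y₁))
    = (𝟙 ((Y₁ ⊗ X₂) ⊗ X₃) ⊗≫ Y₁ ◁ (β_ X₂ X₃).hom ⊗≫ (β_ Y₁ X₃).hom ▷ X₂ ⊗≫
      X₃ ◁ (β_ Y₁ X₂).hom ⊗≫ 𝟙 ((X₃ ⊗ X₂) ⊗ Y₁)) := by
  calc _ = (α_ Y₁ X₂ X₃).hom ≫ (β_ Y₁ (X₂ ⊗ X₃)).hom ≫ (β_ X₂ X₃).hom ▷ Y₁ := by
        rw [braiding_tensor_right_hom]; monoidal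
    _ = (α_ Y₁ X₂ X₃).hom ≫ Y₁ ◁ (β_ X₂ X₃).hom ≫ (β_ Y₁ (X₃ ⊗ X₂)).hom := by
        rw [braiding_naturality_right]
    _ = _ := by rw [braiding_tensor_right_hom]; monoidal

set_option maxHeartbeats 4000000 in
theorem PsiPsi_braid {C : Type*} [Category C] [MonoidalCategory C] [SymmetricCategory C]
    (X₁ Y₁ X₂ Y₂ X₃ : C) :
  (𝟙 (X₁ ⊗ (Y₁ ⊗ (X₂ ⊗ (Y₂ ⊗ X₃)))) ⊗≫
    X₁ ◁ (β_ ((Y₁ ⊗ X₂) ⊗ Y₂) X₃).hom ⊗≫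
    (X₁ ⊗ X₃) ◁ ((β_ Y₁ X₂).hom ▷ Y₂) ⊗≫
    𝟙 (((X₁ ⊗ X₃) ⊗ X₂) ⊗ (Y₁ ⊗ Y₂)))
  = (𝟙 (X₁ ⊗ (Y₁ ⊗ (X₂ ⊗ (Y₂ ⊗ X₃)))) ⊗≫
    X₁ ◁ ((β_ Y₁ X₂).hom ▷ (Y₂ ⊗ X₃)) ⊗≫
    (X₁ ⊗ X₂) ◁ (β_ (Y₁ ⊗ Y₂) X₃).hom ⊗≫
    ((α_ X₁ X₂ X₃).hom ≫ X₁ ◁ (β_ X₂ X₃).hom ≫ (α_ X₁ X₃ X₂).inv) ▷ (Y₁ ⊗ Y₂) ⊗≫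
    𝟙 (((X₁ ⊗ X₃) ⊗ X₂) ⊗ (Y₁ ⊗ Y₂))) := by
  calc _ = 𝟙 (X₁ ⊗ (Y₁ ⊗ (X₂ ⊗ (Y₂ ⊗ X₃)))) ⊗≫
        X₁ ◁ (Y₁ ◁ (X₂ ◁ (β_ Y₂ X₃).hom)) ⊗≫
        X₁ ◁ ((𝟙 ((Y₁ ⊗ X₂) ⊗ X₃) ⊗≫ Y₁ ◁ (β_ X₂ X₃).hom ⊗≫ (β_ Y₁ X₃).hom ▷ X₂ ⊗≫
          X₃ ◁ (β_ Y₁ X₂).hom ⊗≫ 𝟙 ((X₃ ⊗ X₂) ⊗ Y₁)) ▷ Y₂) ⊗≫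
        𝟙 (((X₁ ⊗ X₃) ⊗ X₂) ⊗ (Y₁ ⊗ Y₂)) := by
          simp only [braiding_tensor_left_hom, braiding_tensor_right_hom]; monoidal
    _ = 𝟙 (X₁ ⊗ (Y₁ ⊗ (X₂ ⊗ (Y₂ ⊗ X₃)))) ⊗≫
        X₁ ◁ (Y₁ ◁ (X₂ ◁ (β_ Y₂ X₃).hom)) ⊗≫
        X₁ ◁ (((β_ Y₁ X₂).hom ▷ X₃ ⊗≫ X₂ ◁ (β_ Y₁ X₃).hom ⊗≫ (β_ X₂ X₃).hom ▷ Y₁ ⊗≫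
          𝟙 ((X₃ ⊗ X₂) ⊗ Y₁)) ▷ Y₂) ⊗≫
        𝟙 (((X₁ ⊗ X₃) ⊗ X₂) ⊗ (Y₁ ⊗ Y₂)) := by
          rw [← PsiPsi_mid]
    _ = 𝟙 (X₁ ⊗ (Y₁ ⊗ (X₂ ⊗ (Y₂ ⊗ X₃)))) ⊗≫
        X₁ ◁ ((Y₁ ⊗ X₂) ◁ (β_ Y₂ X₃).hom ≫ (β_ Y₁ X₂).hom ▷ (X₃ ⊗ Y₂)) ⊗≫
        X₁ ◁ ((X₂ ◁ (β_ Y₁ X₃).hom ⊗≫ (β_ X₂ X₃).hom ▷ Y₁ ⊗≫ 𝟙 ((X₃ ⊗ X₂) ⊗ Y₁)) ▷ Y₂) ⊗≫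
        𝟙 (((X₁ ⊗ X₃) ⊗ X₂) ⊗ (Y₁ ⊗ Y₂)) := by
          monoidal
    _ = 𝟙 (X₁ ⊗ (Y₁ ⊗ (X₂ ⊗ (Y₂ ⊗ X₃)))) ⊗≫
        X₁ ◁ ((β_ Y₁ X₂).hom ▷ (Y₂ ⊗ X₃) ≫ (X₂ ⊗ Y₁) ◁ (β_ Y₂ X₃).hom) ⊗≫
        X₁ ◁ ((X₂ ◁ (β_ Y₁ X₃).hom ⊗≫ (β_ X₂ X₃).hom ▷ Y₁ ⊗≫ 𝟙 ((X₃ ⊗ X₂) ⊗ Y₁)) ▷ Y₂) ⊗≫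
        𝟙 (((X₁ ⊗ X₃) ⊗ X₂) ⊗ (Y₁ ⊗ Y₂)) := by
          rw [whisker_exchange]
    _ = _ := by
          simp only [braiding_tensor_left_hom, braiding_tensor_right_hom]; monoidal

set_option maxHeartbeats 4000000 in
theorem PsiPsi1_aux {C : Type*} [Category C] [MonoidalCategory C] [SymmetricCategory C]
    (E : C ⥤ C)
    (ψ : ∀ A B : C, E.obj A ⊗ E.obj B ⟶ E.obj (A ⊗ B))
    (ψ₀ : 𝟙_ C ⟶ E.obj (𝟙_ C))
    (ψ_nat : ∀ {A A' B B' : C} (f : A ⟶ A') (g : B ⟶ B'),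
      (E.map f ⊗ₘ E.map g) ≫ ψ A' B' = ψ A B ≫ E.map (f ⊗ₘ g))
    (ψa : ∀ A B C' : C,
      (ψ A B ⊗ₘ 𝟙 (E.obj C')) ≫ ψ (A ⊗ B) C' ≫ E.map (α_ A B C').hom
        = (α_ (E.obj A) (E.obj B) (E.obj C')).hom ≫ (𝟙 (E.obj A) ⊗ₘ ψ B C') ≫ ψ A (B ⊗ C'))
    (ψl : ∀ A : C,
      (ψ₀ ⊗ₘ 𝟙 (E.obj A)) ≫ ψ (𝟙_ C) A ≫ E.map (λ_ A).hom = (λ_ (E.obj A)).hom)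
    (ψr : ∀ A : C,
      (𝟙 (E.obj A) ⊗ₘ ψ₀) ≫ ψ A (𝟙_ C) ≫ E.map (ρ_ A).hom = (ρ_ (E.obj A)).hom)
    (ψc : ∀ A B : C,
      ψ A B ≫ E.map (β_ A B).hom = (β_ (E.obj A) (E.obj B)).hom ≫ ψ B A)
    (Ψ : ∀ A₁ A₂ B : C, (E.obj A₁ ⊗ B) ⊗ E.obj A₂ ⟶ E.obj (A₁ ⊗ A₂) ⊗ B)
    (hΨ : ∀ A₁ A₂ B : C,
      Ψ A₁ A₂ B = (α_ (E.obj A₁) B (E.obj A₂)).hom ≫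
        (𝟙 (E.obj A₁) ⊗ₘ (β_ B (E.obj A₂)).hom) ≫
        (α_ (E.obj A₁) (E.obj A₂) B).inv ≫ (ψ A₁ A₂ ⊗ₘ 𝟙 B)) :
    ∀ A₁ A₂ A₃ B₁ B₂ : C,
      (𝟙 (E.obj A₁ ⊗ (B₁ ⊗ (E.obj A₂ ⊗ (B₂ ⊗ E.obj A₃)))) ⊗≫
        Ψ A₁ A₃ ((B₁ ⊗ E.obj A₂) ⊗ B₂) ⊗≫
        (Ψ (A₁ ⊗ A₃) A₂ B₁ ⊗ₘ 𝟙 B₂) ⊗≫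
        𝟙 (E.obj ((A₁ ⊗ A₃) ⊗ A₂) ⊗ (B₁ ⊗ B₂)))
      = (𝟙 (E.obj A₁ ⊗ (B₁ ⊗ (E.obj A₂ ⊗ (B₂ ⊗ E.obj A₃)))) ⊗≫
        (Ψ A₁ A₂ B₁ ⊗ₘ 𝟙 (B₂ ⊗ E.obj A₃)) ⊗≫
        Ψ (A₁ ⊗ A₂) A₃ (B₁ ⊗ B₂) ⊗≫
        ((E.map (α_ A₁ A₂ A₃).hom ≫ E.map (𝟙 A₁ ⊗ₘ (β_ A₂ A₃).hom) ≫
            E.map (α_ A₁ A₃ A₂).inv) ⊗ₘ 𝟙 (B₁ ⊗ B₂))) := by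
  intro A₁ A₂ A₃ B₁ B₂
  have key' := PsiPsi_key E ψ (fun f g => ψ_nat f g) ψa ψc A₁ A₂ A₃
  simp only [id_tensorHom, tensorHom_id] at key'
  simp only [hΨ, id_tensorHom, tensorHom_id]
  calc _ = 𝟙 (E.obj A₁ ⊗ (B₁ ⊗ (E.obj A₂ ⊗ (B₂ ⊗ E.obj A₃)))) ⊗≫
        E.obj A₁ ◁ (β_ ((B₁ ⊗ E.obj A₂) ⊗ B₂) (E.obj A₃)).hom ⊗≫
        ((ψ A₁ A₃ ▷ (B₁ ⊗ E.obj A₂) ≫ E.obj (A₁ ⊗ A₃) ◁ (β_ B₁ (E.obj A₂)).hom) ▷ B₂) ⊗≫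
        (ψ (A₁ ⊗ A₃) A₂ ▷ B₁ ▷ B₂) ⊗≫
        𝟙 (E.obj ((A₁ ⊗ A₃) ⊗ A₂) ⊗ (B₁ ⊗ B₂)) := by
          monoidal
    _ = 𝟙 (E.obj A₁ ⊗ (B₁ ⊗ (E.obj A₂ ⊗ (B₂ ⊗ E.obj A₃)))) ⊗≫
        E.obj A₁ ◁ (β_ ((B₁ ⊗ E.obj A₂) ⊗ B₂) (E.obj A₃)).hom ⊗≫
        (((E.obj A₁ ⊗ E.obj A₃) ◁ (β_ B₁ (E.obj A₂)).hom ≫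
          ψ A₁ A₃ ▷ (E.obj A₂ ⊗ B₁)) ▷ B₂) ⊗≫
        (ψ (A₁ ⊗ A₃) A₂ ▷ B₁ ▷ B₂) ⊗≫
        𝟙 (E.obj ((A₁ ⊗ A₃) ⊗ A₂) ⊗ (B₁ ⊗ B₂)) := by
          rw [← whisker_exchange]
    _ = (𝟙 (E.obj A₁ ⊗ (B₁ ⊗ (E.obj A₂ ⊗ (B₂ ⊗ E.obj A₃)))) ⊗≫
        E.obj A₁ ◁ (β_ ((B₁ ⊗ E.obj A₂) ⊗ B₂) (E.obj A₃)).hom ⊗≫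
        (E.obj A₁ ⊗ E.obj A₃) ◁ ((β_ B₁ (E.obj A₂)).hom ▷ B₂) ⊗≫
        𝟙 (((E.obj A₁ ⊗ E.obj A₃) ⊗ E.obj A₂) ⊗ (B₁ ⊗ B₂))) ≫
        ((ψ A₁ A₃ ▷ E.obj A₂ ≫ ψ (A₁ ⊗ A₃) A₂) ▷ (B₁ ⊗ B₂)) := by
          monoidal
    _ = (𝟙 (E.obj A₁ ⊗ (B₁ ⊗ (E.obj A₂ ⊗ (B₂ ⊗ E.obj A₃)))) ⊗≫
        E.obj A₁ ◁ ((β_ B₁ (E.obj A₂)).hom ▷ (B₂ ⊗ E.obj A₃)) ⊗≫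
        (E.obj A₁ ⊗ E.obj A₂) ◁ (β_ (B₁ ⊗ B₂) (E.obj A₃)).hom ⊗≫
        ((α_ (E.obj A₁) (E.obj A₂) (E.obj A₃)).hom ≫
          E.obj A₁ ◁ (β_ (E.obj A₂) (E.obj A₃)).hom ≫
          (α_ (E.obj A₁) (E.obj A₃) (E.obj A₂)).inv) ▷ (B₁ ⊗ B₂) ⊗≫
        𝟙 (((E.obj A₁ ⊗ E.obj A₃) ⊗ E.obj A₂) ⊗ (B₁ ⊗ B₂))) ≫
        ((ψ A₁ A₃ ▷ E.obj A₂ ≫ ψ (A₁ ⊗ A₃) A₂) ▷ (B₁ ⊗ B₂)) := by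
          rw [PsiPsi_braid]
    _ = 𝟙 (E.obj A₁ ⊗ (B₁ ⊗ (E.obj A₂ ⊗ (B₂ ⊗ E.obj A₃)))) ⊗≫
        E.obj A₁ ◁ ((β_ B₁ (E.obj A₂)).hom ▷ (B₂ ⊗ E.obj A₃)) ⊗≫
        (E.obj A₁ ⊗ E.obj A₂) ◁ (β_ (B₁ ⊗ B₂) (E.obj A₃)).hom ⊗≫
        (((α_ (E.obj A₁) (E.obj A₂) (E.obj A₃)).hom ≫
          E.obj A₁ ◁ (β_ (E.obj A₂) (E.obj A₃)).hom ≫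
          (α_ (E.obj A₁) (E.obj A₃) (E.obj A₂)).inv ≫
          ψ A₁ A₃ ▷ E.obj A₂ ≫ ψ (A₁ ⊗ A₃) A₂) ▷ (B₁ ⊗ B₂)) ⊗≫
        𝟙 (E.obj ((A₁ ⊗ A₃) ⊗ A₂) ⊗ (B₁ ⊗ B₂)) := by
          monoidal
    _ = 𝟙 (E.obj A₁ ⊗ (B₁ ⊗ (E.obj A₂ ⊗ (B₂ ⊗ E.obj A₃)))) ⊗≫
        E.obj A₁ ◁ ((β_ B₁ (E.obj A₂)).hom ▷ (B₂ ⊗ E.obj A₃)) ⊗≫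
        (E.obj A₁ ⊗ E.obj A₂) ◁ (β_ (B₁ ⊗ B₂) (E.obj A₃)).hom ⊗≫
        ((ψ A₁ A₂ ▷ E.obj A₃ ≫ ψ (A₁ ⊗ A₂) A₃ ≫ E.map (α_ A₁ A₂ A₃).hom ≫
          E.map (A₁ ◁ (β_ A₂ A₃).hom) ≫ E.map (α_ A₁ A₃ A₂).inv) ▷ (B₁ ⊗ B₂)) ⊗≫
        𝟙 (E.obj ((A₁ ⊗ A₃) ⊗ A₂) ⊗ (B₁ ⊗ B₂)) := by
          rw [← key']
    _ = 𝟙 (E.obj A₁ ⊗ (B₁ ⊗ (E.obj A₂ ⊗ (B₂ ⊗ E.obj A₃)))) ⊗≫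
        E.obj A₁ ◁ ((β_ B₁ (E.obj A₂)).hom ▷ (B₂ ⊗ E.obj A₃)) ⊗≫
        ((E.obj A₁ ⊗ E.obj A₂) ◁ (β_ (B₁ ⊗ B₂) (E.obj A₃)).hom ≫
          ψ A₁ A₂ ▷ (E.obj A₃ ⊗ (B₁ ⊗ B₂))) ⊗≫
        ((ψ (A₁ ⊗ A₂) A₃ ≫ E.map (α_ A₁ A₂ A₃).hom ≫
          E.map (A₁ ◁ (β_ A₂ A₃).hom) ≫ E.map (α_ A₁ A₃ A₂).inv) ▷ (B₁ ⊗ B₂)) ⊗≫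
        𝟙 (E.obj ((A₁ ⊗ A₃) ⊗ A₂) ⊗ (B₁ ⊗ B₂)) := by
          monoidal
    _ = 𝟙 (E.obj A₁ ⊗ (B₁ ⊗ (E.obj A₂ ⊗ (B₂ ⊗ E.obj A₃)))) ⊗≫
        E.obj A₁ ◁ ((β_ B₁ (E.obj A₂)).hom ▷ (B₂ ⊗ E.obj A₃)) ⊗≫
        (ψ A₁ A₂ ▷ ((B₁ ⊗ B₂) ⊗ E.obj A₃) ≫
          E.obj (A₁ ⊗ A₂) ◁ (β_ (B₁ ⊗ B₂) (E.obj A₃)).hom) ⊗≫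
        ((ψ (A₁ ⊗ A₂) A₃ ≫ E.map (α_ A₁ A₂ A₃).hom ≫
          E.map (A₁ ◁ (β_ A₂ A₃).hom) ≫ E.map (α_ A₁ A₃ A₂).inv) ▷ (B₁ ⊗ B₂)) ⊗≫
        𝟙 (E.obj ((A₁ ⊗ A₃) ⊗ A₂) ⊗ (B₁ ⊗ B₂)) := by
          rw [whisker_exchange]
    _ = _ := by
          monoidal

set_option maxHeartbeats 1000000 in
/-- For a linear (symmetric lax monoidal) endofunctor `E` of a symmetric monoidal
category, with `Ψ_{A₁,A₂;B} := (ψ_{A₁,A₂} ⊗ 1_B) ∘ a⁻¹ ∘ (1_{EA₁} ⊗ c_{B,EA₂}) ∘ a`,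
the equation (ΨΨ1) holds (structural coherence isomorphisms inserted via `⊗≫`). -/
theorem PsiPsi1 {C : Type*} [Category C] [MonoidalCategory C] [SymmetricCategory C]
    (E : C ⥤ C)
    (ψ : ∀ A B : C, E.obj A ⊗ E.obj B ⟶ E.obj (A ⊗ B))
    (ψ₀ : 𝟙_ C ⟶ E.obj (𝟙_ C))
    (ψ_nat : ∀ {A A' B B' : C} (f : A ⟶ A') (g : B ⟶ B'),
      (E.map f ⊗ₘ E.map g) ≫ ψ A' B' = ψ A B ≫ E.map (f ⊗ₘ g))
    (ψa : ∀ A B C' : C,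
      (ψ A B ⊗ₘ 𝟙 (E.obj C')) ≫ ψ (A ⊗ B) C' ≫ E.map (α_ A B C').hom
        = (α_ (E.obj A) (E.obj B) (E.obj C')).hom ≫ (𝟙 (E.obj A) ⊗ₘ ψ B C') ≫ ψ A (B ⊗ C'))
    (ψl : ∀ A : C,
      (ψ₀ ⊗ₘ 𝟙 (E.obj A)) ≫ ψ (𝟙_ C) A ≫ E.map (λ_ A).hom = (λ_ (E.obj A)).hom)
    (ψr : ∀ A : C,
      (𝟙 (E.obj A) ⊗ₘ ψ₀) ≫ ψ A (𝟙_ C) ≫ E.map (ρ_ A).hom = (ρ_ (E.obj A)).hom)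
    (ψc : ∀ A B : C,
      ψ A B ≫ E.map (β_ A B).hom = (β_ (E.obj A) (E.obj B)).hom ≫ ψ B A)
    (Ψ : ∀ A₁ A₂ B : C, (E.obj A₁ ⊗ B) ⊗ E.obj A₂ ⟶ E.obj (A₁ ⊗ A₂) ⊗ B)
    (hΨ : ∀ A₁ A₂ B : C,
      Ψ A₁ A₂ B = (α_ (E.obj A₁) B (E.obj A₂)).hom ≫
        (𝟙 (E.obj A₁) ⊗ₘ (β_ B (E.obj A₂)).hom) ≫
        (α_ (E.obj A₁) (E.obj A₂) B).inv ≫ (ψ A₁ A₂ ⊗ₘ 𝟙 B)) :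
    ∀ A₁ A₂ A₃ B₁ B₂ : C,
      (𝟙 (E.obj A₁ ⊗ (B₁ ⊗ (E.obj A₂ ⊗ (B₂ ⊗ E.obj A₃)))) ⊗≫
        Ψ A₁ A₃ ((B₁ ⊗ E.obj A₂) ⊗ B₂) ⊗≫
        (Ψ (A₁ ⊗ A₃) A₂ B₁ ⊗ₘ 𝟙 B₂) ⊗≫
        𝟙 (E.obj ((A₁ ⊗ A₃) ⊗ A₂) ⊗ (B₁ ⊗ B₂)))
      = (𝟙 (E.obj A₁ ⊗ (B₁ ⊗ (E.obj A₂ ⊗ (B₂ ⊗ E.obj A₃)))) ⊗≫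
        (Ψ A₁ A₂ B₁ ⊗ₘ 𝟙 (B₂ ⊗ E.obj A₃)) ⊗≫
        Ψ (A₁ ⊗ A₂) A₃ (B₁ ⊗ B₂) ⊗≫
        ((E.map (α_ A₁ A₂ A₃).hom ≫ E.map (𝟙 A₁ ⊗ₘ (β_ A₂ A₃).hom) ≫
            E.map (α_ A₁ A₃ A₂).inv) ⊗ₘ 𝟙 (B₁ ⊗ B₂))) := by
  intro A₁ A₂ A₃ B₁ B₂
  exact PsiPsi1_aux E ψ ψ₀ (fun f g => ψ_nat f g) ψa ψl ψr ψc Ψ hΨ A₁ A₂ A₃ B₁ B₂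
end

section
/- The equation (ΨΨ2) holds: for all objects A₁, A₂, A₃, B₁, B₂ of C, the composite (Ψ_{A₁,A₂⊗A₃;B₁} ⊗ 1_{B₂}) ∘ (1_{EA₁⊗B₁} ⊗ Ψ_{A₂,A₃;B₂}) equals the composite (E(a_{A₁,A₂,A₃}) ⊗ 1_{B₁⊗B₂}) ∘ Ψ_{A₁⊗A₂,A₃;B₁⊗B₂} ∘ (Ψ_{A₁,A₂;B₁} ⊗ 1_{B₂⊗EA₃}), where on each side the unique structural coherence isomorphisms of C (built from a, l, r and their inverses) are inserted between the displayed factors so that the composites are well-typed morphisms with common source a bracketing of EA₁ ⊗ B₁ ⊗ EA₂ ⊗ B₂ ⊗ EA₃ and common target E(A₁⊗(A₂⊗A₃)) ⊗ (B₁⊗B₂) (in Lean this can be expressed with monoidal coherent composition ⊗≫). -/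
open CategoryTheory MonoidalCategory

set_option maxHeartbeats 100000000 in
theorem PsiPsi2_aux {C : Type*} [Category C] [MonoidalCategory C] [SymmetricCategory C]
    (E : C ⥤ C)
    (ψ : ∀ A B : C, E.obj A ⊗ E.obj B ⟶ E.obj (A ⊗ B))
    (ψ₀ : 𝟙_ C ⟶ E.obj (𝟙_ C))
    (ψ_nat : ∀ {A A' B B' : C} (f : A ⟶ A') (g : B ⟶ B'),
      (E.map f ⊗ₘ E.map g) ≫ ψ A' B' = ψ A B ≫ E.map (f ⊗ₘ g))
    (ψa : ∀ A B C' : C,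
      (ψ A B ⊗ₘ 𝟙 (E.obj C')) ≫ ψ (A ⊗ B) C' ≫ E.map (α_ A B C').hom
        = (α_ (E.obj A) (E.obj B) (E.obj C')).hom ≫ (𝟙 (E.obj A) ⊗ₘ ψ B C') ≫ ψ A (B ⊗ C'))
    (ψl : ∀ A : C,
      (ψ₀ ⊗ₘ 𝟙 (E.obj A)) ≫ ψ (𝟙_ C) A ≫ E.map (λ_ A).hom = (λ_ (E.obj A)).hom)
    (ψr : ∀ A : C,
      (𝟙 (E.obj A) ⊗ₘ ψ₀) ≫ ψ A (𝟙_ C) ≫ E.map (ρ_ A).hom = (ρ_ (E.obj A)).hom)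
    (ψc : ∀ A B : C,
      ψ A B ≫ E.map (β_ A B).hom = (β_ (E.obj A) (E.obj B)).hom ≫ ψ B A)
    (Ψ : ∀ A₁ A₂ B : C, (E.obj A₁ ⊗ B) ⊗ E.obj A₂ ⟶ E.obj (A₁ ⊗ A₂) ⊗ B)
    (hΨ : ∀ A₁ A₂ B : C,
      Ψ A₁ A₂ B = (α_ (E.obj A₁) B (E.obj A₂)).hom ≫
        (𝟙 (E.obj A₁) ⊗ₘ (β_ B (E.obj A₂)).hom) ≫
        (α_ (E.obj A₁) (E.obj A₂) B).inv ≫ (ψ A₁ A₂ ⊗ₘ 𝟙 B)) :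
    ∀ A₁ A₂ A₃ B₁ B₂ : C,
      (𝟙 (E.obj A₁ ⊗ (B₁ ⊗ (E.obj A₂ ⊗ (B₂ ⊗ E.obj A₃)))) ⊗≫
        (𝟙 (E.obj A₁ ⊗ B₁) ⊗ₘ Ψ A₂ A₃ B₂) ⊗≫
        (Ψ A₁ (A₂ ⊗ A₃) B₁ ⊗ₘ 𝟙 B₂) ⊗≫
        𝟙 (E.obj (A₁ ⊗ (A₂ ⊗ A₃)) ⊗ (B₁ ⊗ B₂)))
      = (𝟙 (E.obj A₁ ⊗ (B₁ ⊗ (E.obj A₂ ⊗ (B₂ ⊗ E.obj A₃)))) ⊗≫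
        (Ψ A₁ A₂ B₁ ⊗ₘ 𝟙 (B₂ ⊗ E.obj A₃)) ⊗≫
        Ψ (A₁ ⊗ A₂) A₃ (B₁ ⊗ B₂) ⊗≫
        (E.map (α_ A₁ A₂ A₃).hom ⊗ₘ 𝟙 (B₁ ⊗ B₂))) := by
  intro A₁ A₂ A₃ B₁ B₂
  calc
    _ = 𝟙 (E.obj A₁ ⊗ (B₁ ⊗ (E.obj A₂ ⊗ (B₂ ⊗ E.obj A₃)))) ⊗≫
        E.obj A₁ ◁ (B₁ ◁ (E.obj A₂ ◁ (β_ B₂ (E.obj A₃)).hom)) ⊗≫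
        E.obj A₁ ◁ ((B₁ ◁ ψ A₂ A₃ ≫ (β_ B₁ (E.obj (A₂ ⊗ A₃))).hom) ▷ B₂) ⊗≫
        ψ A₁ (A₂ ⊗ A₃) ▷ (B₁ ⊗ B₂) := by
      rw [hΨ, hΨ]; monoidal
    _ = 𝟙 (E.obj A₁ ⊗ (B₁ ⊗ (E.obj A₂ ⊗ (B₂ ⊗ E.obj A₃)))) ⊗≫
        E.obj A₁ ◁ (B₁ ◁ (E.obj A₂ ◁ (β_ B₂ (E.obj A₃)).hom)) ⊗≫
        E.obj A₁ ◁ (((β_ B₁ (E.obj A₂ ⊗ E.obj A₃)).hom ≫ ψ A₂ A₃ ▷ B₁) ▷ B₂) ⊗≫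
        ψ A₁ (A₂ ⊗ A₃) ▷ (B₁ ⊗ B₂) := by
      rw [BraidedCategory.braiding_naturality_right]
    _ = 𝟙 (E.obj A₁ ⊗ (B₁ ⊗ (E.obj A₂ ⊗ (B₂ ⊗ E.obj A₃)))) ⊗≫
        (E.obj A₁ ⊗ B₁) ◁ (E.obj A₂ ◁ (β_ B₂ (E.obj A₃)).hom) ⊗≫
        E.obj A₁ ◁ ((β_ B₁ (E.obj A₂ ⊗ E.obj A₃)).hom ▷ B₂) ⊗≫
        (E.obj A₁ ◁ ψ A₂ A₃) ▷ (B₁ ⊗ B₂) ⊗≫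
        ψ A₁ (A₂ ⊗ A₃) ▷ (B₁ ⊗ B₂) := by
      monoidal
    _ = 𝟙 (E.obj A₁ ⊗ (B₁ ⊗ (E.obj A₂ ⊗ (B₂ ⊗ E.obj A₃)))) ⊗≫
        E.obj A₁ ◁ (((B₁ ⊗ E.obj A₂) ◁ (β_ B₂ (E.obj A₃)).hom) ≫
          ((β_ B₁ (E.obj A₂)).hom ▷ (E.obj A₃ ⊗ B₂))) ⊗≫
        (E.obj A₁ ⊗ E.obj A₂) ◁ ((β_ B₁ (E.obj A₃)).hom ▷ B₂) ⊗≫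
        (E.obj A₁ ◁ ψ A₂ A₃) ▷ (B₁ ⊗ B₂) ⊗≫
        ψ A₁ (A₂ ⊗ A₃) ▷ (B₁ ⊗ B₂) := by
      rw [BraidedCategory.braiding_tensor_right_hom]; monoidal
    _ = 𝟙 (E.obj A₁ ⊗ (B₁ ⊗ (E.obj A₂ ⊗ (B₂ ⊗ E.obj A₃)))) ⊗≫
        E.obj A₁ ◁ (((β_ B₁ (E.obj A₂)).hom ▷ (B₂ ⊗ E.obj A₃)) ≫
          ((E.obj A₂ ⊗ B₁) ◁ (β_ B₂ (E.obj A₃)).hom)) ⊗≫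
        (E.obj A₁ ⊗ E.obj A₂) ◁ ((β_ B₁ (E.obj A₃)).hom ▷ B₂) ⊗≫
        (E.obj A₁ ◁ ψ A₂ A₃) ▷ (B₁ ⊗ B₂) ⊗≫
        ψ A₁ (A₂ ⊗ A₃) ▷ (B₁ ⊗ B₂) := by
      rw [whisker_exchange (β_ B₁ (E.obj A₂)).hom (β_ B₂ (E.obj A₃)).hom]
    _ = 𝟙 (E.obj A₁ ⊗ (B₁ ⊗ (E.obj A₂ ⊗ (B₂ ⊗ E.obj A₃)))) ⊗≫
        E.obj A₁ ◁ ((β_ B₁ (E.obj A₂)).hom ▷ (B₂ ⊗ E.obj A₃)) ⊗≫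
        (E.obj A₁ ⊗ E.obj A₂) ◁ (B₁ ◁ (β_ B₂ (E.obj A₃)).hom ≫
          (α_ B₁ (E.obj A₃) B₂).inv ≫ (β_ B₁ (E.obj A₃)).hom ▷ B₂) ⊗≫
        (((α_ (E.obj A₁) (E.obj A₂) (E.obj A₃)).hom ≫ (𝟙 (E.obj A₁) ⊗ₘ ψ A₂ A₃) ≫
          ψ A₁ (A₂ ⊗ A₃)) ▷ (B₁ ⊗ B₂)) := by
      monoidal
    _ = 𝟙 (E.obj A₁ ⊗ (B₁ ⊗ (E.obj A₂ ⊗ (B₂ ⊗ E.obj A₃)))) ⊗≫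
        E.obj A₁ ◁ ((β_ B₁ (E.obj A₂)).hom ▷ (B₂ ⊗ E.obj A₃)) ⊗≫
        ((E.obj A₁ ⊗ E.obj A₂) ◁ (B₁ ◁ (β_ B₂ (E.obj A₃)).hom ≫
          (α_ B₁ (E.obj A₃) B₂).inv ≫ (β_ B₁ (E.obj A₃)).hom ▷ B₂) ≫
          ψ A₁ A₂ ▷ ((E.obj A₃ ⊗ B₁) ⊗ B₂)) ⊗≫
        (ψ (A₁ ⊗ A₂) A₃ ≫ E.map (α_ A₁ A₂ A₃).hom) ▷ (B₁ ⊗ B₂) := by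
      rw [← ψa]; monoidal
    _ = 𝟙 (E.obj A₁ ⊗ (B₁ ⊗ (E.obj A₂ ⊗ (B₂ ⊗ E.obj A₃)))) ⊗≫
        E.obj A₁ ◁ ((β_ B₁ (E.obj A₂)).hom ▷ (B₂ ⊗ E.obj A₃)) ⊗≫
        (ψ A₁ A₂ ▷ (B₁ ⊗ (B₂ ⊗ E.obj A₃)) ≫
          E.obj (A₁ ⊗ A₂) ◁ (B₁ ◁ (β_ B₂ (E.obj A₃)).hom ≫
          (α_ B₁ (E.obj A₃) B₂).inv ≫ (β_ B₁ (E.obj A₃)).hom ▷ B₂)) ⊗≫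
        (ψ (A₁ ⊗ A₂) A₃ ≫ E.map (α_ A₁ A₂ A₃).hom) ▷ (B₁ ⊗ B₂) := by
      rw [← whisker_exchange (ψ A₁ A₂)]
    _ = _ := by
      rw [hΨ, hΨ, BraidedCategory.braiding_tensor_left_hom]; monoidal


set_option maxHeartbeats 1000000 in
/-- For a linear (symmetric lax monoidal) endofunctor `E` of a symmetric monoidal
category, with `Ψ_{A₁,A₂;B} := (ψ_{A₁,A₂} ⊗ 1_B) ∘ a⁻¹ ∘ (1_{EA₁} ⊗ c_{B,EA₂}) ∘ a`,
the equation (ΨΨ2) holds (structural coherence isomorphisms inserted via `⊗≫`). -/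
theorem PsiPsi2 {C : Type*} [Category C] [MonoidalCategory C] [SymmetricCategory C]
    (E : C ⥤ C)
    (ψ : ∀ A B : C, E.obj A ⊗ E.obj B ⟶ E.obj (A ⊗ B))
    (ψ₀ : 𝟙_ C ⟶ E.obj (𝟙_ C))
    (ψ_nat : ∀ {A A' B B' : C} (f : A ⟶ A') (g : B ⟶ B'),
      (E.map f ⊗ₘ E.map g) ≫ ψ A' B' = ψ A B ≫ E.map (f ⊗ₘ g))
    (ψa : ∀ A B C' : C,
      (ψ A B ⊗ₘ 𝟙 (E.obj C')) ≫ ψ (A ⊗ B) C' ≫ E.map (α_ A B C').hom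
        = (α_ (E.obj A) (E.obj B) (E.obj C')).hom ≫ (𝟙 (E.obj A) ⊗ₘ ψ B C') ≫ ψ A (B ⊗ C'))
    (ψl : ∀ A : C,
      (ψ₀ ⊗ₘ 𝟙 (E.obj A)) ≫ ψ (𝟙_ C) A ≫ E.map (λ_ A).hom = (λ_ (E.obj A)).hom)
    (ψr : ∀ A : C,
      (𝟙 (E.obj A) ⊗ₘ ψ₀) ≫ ψ A (𝟙_ C) ≫ E.map (ρ_ A).hom = (ρ_ (E.obj A)).hom)
    (ψc : ∀ A B : C,
      ψ A B ≫ E.map (β_ A B).hom = (β_ (E.obj A) (E.obj B)).hom ≫ ψ B A)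
    (Ψ : ∀ A₁ A₂ B : C, (E.obj A₁ ⊗ B) ⊗ E.obj A₂ ⟶ E.obj (A₁ ⊗ A₂) ⊗ B)
    (hΨ : ∀ A₁ A₂ B : C,
      Ψ A₁ A₂ B = (α_ (E.obj A₁) B (E.obj A₂)).hom ≫
        (𝟙 (E.obj A₁) ⊗ₘ (β_ B (E.obj A₂)).hom) ≫
        (α_ (E.obj A₁) (E.obj A₂) B).inv ≫ (ψ A₁ A₂ ⊗ₘ 𝟙 B)) :
    ∀ A₁ A₂ A₃ B₁ B₂ : C,
      (𝟙 (E.obj A₁ ⊗ (B₁ ⊗ (E.obj A₂ ⊗ (B₂ ⊗ E.obj A₃)))) ⊗≫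
        (𝟙 (E.obj A₁ ⊗ B₁) ⊗ₘ Ψ A₂ A₃ B₂) ⊗≫
        (Ψ A₁ (A₂ ⊗ A₃) B₁ ⊗ₘ 𝟙 B₂) ⊗≫
        𝟙 (E.obj (A₁ ⊗ (A₂ ⊗ A₃)) ⊗ (B₁ ⊗ B₂)))
      = (𝟙 (E.obj A₁ ⊗ (B₁ ⊗ (E.obj A₂ ⊗ (B₂ ⊗ E.obj A₃)))) ⊗≫
        (Ψ A₁ A₂ B₁ ⊗ₘ 𝟙 (B₂ ⊗ E.obj A₃)) ⊗≫
        Ψ (A₁ ⊗ A₂) A₃ (B₁ ⊗ B₂) ⊗≫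
        (E.map (α_ A₁ A₂ A₃).hom ⊗ₘ 𝟙 (B₁ ⊗ B₂))) :=
  PsiPsi2_aux E ψ ψ₀ ψ_nat ψa ψl ψr ψc Ψ hΨ
end
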